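/- Let (α₀, α₁, α₂, α₃) be a rotation quadrangle with relative revolute axes r_{i,i+1}. Let ℓ be a line such that for each i (indices modulo 4) the homologous images α_i(ℓ) and α_{i+1}(ℓ) have a common point, and such that the direction of ℓ is not orthogonal to the direction of r_{i,i+1}. Then ℓ intersects each of the four axes r₀₁, r₁₂, r₂₃, r₃₀; that is, ℓ is a common transversal of the four relative revolute axes. -/

import Mathlib

noncomputable section

abbrev E : Type := EuclideanSpace ℝ (Fin 3)

/-- A line: a one-dimensional affine subspace. -/
def IsLine (s : AffineSubspace ℝ E) : Prop := Module.finrank ℝ s.direction = 1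

/-- A plane: a two-dimensional affine subspace. -/
def IsPlane (s : AffineSubspace ℝ E) : Prop := Module.finrank ℝ s.direction = 2

/-- A set of points lies on a circle or a line: it is concyclic (contained in the
intersection of a sphere and a plane) or collinear. -/
def ConcyclicOrCollinear (s : Set E) : Prop :=
  EuclideanGeometry.Concyclic s ∨ Collinear ℝ s

/-- `τ` is a rotation with axis `r`: an isometry different from the identity whose
linear part has determinant 1 and which fixes every point of the line `r`. -/
def IsRotation (τ : E ≃ᵃⁱ[ℝ] E) (r : AffineSubspace ℝ E) : Prop :=
  τ ≠ AffineIsometryEquiv.refl ℝ E ∧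
  LinearMap.det (τ.linearIsometryEquiv.toLinearEquiv : E →ₗ[ℝ] E) = 1 ∧
  IsLine r ∧ ∀ x ∈ r, τ x = x

/-- `(α 0, α 1, α 2, α 3)` is a rotation quadrangle with relative revolute axes
`r i` (in the moving space): each relative displacement `τ_{i,i+1} = α (i+1) ∘ (α i)⁻¹`
is a rotation whose axis is the image `α i (r i)`. -/
def IsRotationQuadrangle (α : Fin 4 → (E ≃ᵃⁱ[ℝ] E)) (r : Fin 4 → AffineSubspace ℝ E) : Prop :=
  ∀ i : Fin 4,
    IsRotation ((α i).symm.trans (α (i + 1)))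
      ((r i).map (α i).toAffineIsometry.toAffineMap)

open scoped RealInnerProductSpace

private theorem fixed_big (T : E ≃ₗᵢ[ℝ] E)
    (hdet : LinearMap.det (T.toLinearEquiv : E →ₗ[ℝ] E) = 1)
    (v w : E) (hv : T v = v) (hw : T w = w)
    (hind : LinearIndependent ℝ ![v, w]) : ∀ x, T x = x := by
  classical
  set F : Submodule ℝ E := LinearMap.ker ((T.toLinearEquiv : E →ₗ[ℝ] E) - LinearMap.id) with hF
  have memF : ∀ x, x ∈ F ↔ T x = x := by
    intro x
    simp [hF, LinearMap.mem_ker, LinearMap.sub_apply, sub_eq_zero]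
  have hspan : Submodule.span ℝ (Set.range ![v, w]) ≤ F := by
    rw [Submodule.span_le]
    rintro x ⟨j, rfl⟩
    fin_cases j <;> simp [memF, hv, hw]
  have hF2 : 2 ≤ Module.finrank ℝ F := by
    have := Submodule.finrank_mono hspan
    rwa [finrank_span_eq_card hind, Fintype.card_fin] at this
  have hTperp : ∀ u ∈ Fᗮ, T u ∈ Fᗮ := by
    intro u hu f hf
    have hf' : T f = f := (memF f).1 hf
    calc ⟪f, T u⟫ = ⟪T f, T u⟫ := by rw [hf']
    _ = ⟪f, u⟫ := T.inner_map_map f u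
    _ = 0 := hu f hf
  have hfr : Module.finrank ℝ F + Module.finrank ℝ Fᗮ = 3 := by
    simpa using Submodule.finrank_add_finrank_orthogonal (K := F)
  have hcases : Module.finrank ℝ Fᗮ = 0 ∨ Module.finrank ℝ Fᗮ = 1 := by omega
  rcases hcases with h0 | h1
  · have hb : Fᗮ = ⊥ := Submodule.finrank_eq_zero.mp h0
    have hFtop : F = ⊤ := Submodule.orthogonal_eq_bot_iff.mp hb
    intro x
    exact (memF x).1 (hFtop ▸ Submodule.mem_top)
  · exfalso
    obtain ⟨u, hu0, hu⟩ := finrank_eq_one_iff' (K := ℝ) (V := Fᗮ) |>.mp h1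
    have hTu : (T u : E) ∈ Fᗮ := hTperp u u.2
    obtain ⟨c, hc⟩ := hu ⟨T u, hTu⟩
    have hc' : c • (u : E) = T u := congrArg Subtype.val hc
    have hu0' : (u : E) ≠ 0 := fun h => hu0 (Subtype.ext h)
    have hcnorm : |c| = 1 := by
      have h1' : ‖c • (u : E)‖ = ‖(u : E)‖ := by rw [hc', T.norm_map]
      rw [norm_smul, Real.norm_eq_abs] at h1'
      have h2' : |c| * ‖(u : E)‖ = 1 * ‖(u : E)‖ := by rw [one_mul]; exact h1'
      exact mul_right_cancel₀ (norm_ne_zero_iff.mpr hu0') h2' 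
    have hcm1 : c = -1 := by
      rcases abs_eq (by norm_num : (0:ℝ) ≤ 1) |>.mp hcnorm with h | h
      · exfalso
        rw [h, one_smul] at hc'
        have huF : (u : E) ∈ F := (memF _).2 hc'.symm
        have : ⟪(u : E), (u : E)⟫ = 0 := u.2 _ huF
        exact hu0' (inner_self_eq_zero.mp this)
      · exact h
    -- T = reflection F
    have hTrefl : ∀ x : E, T x = (F.reflection) x := by
      intro x
      obtain ⟨f, hf, g, hg, rfl⟩ := F.exists_add_mem_mem_orthogonal x
      obtain ⟨a, ha⟩ := hu ⟨g, hg⟩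
      have ha' : a • (u : E) = g := congrArg Subtype.val ha
      have hTf : T f = f := (memF f).1 hf
      have hTg : T g = -g := by
        rw [← ha', map_smul, ← hc', hcm1]
        module
      have hrf : F.reflection f = f := Submodule.reflection_mem_subspace_eq_self hf
      have hrg : F.reflection g = -g := Submodule.reflection_mem_subspace_orthogonalComplement_eq_neg hg
      rw [map_add, map_add, hTf, hTg, hrf, hrg]
    have heq : (T.toLinearEquiv : E →ₗ[ℝ] E) = (F.reflection).toLinearMap :=
      LinearMap.ext fun x => hTrefl x
    rw [heq, Submodule.det_reflection, h1] at hdet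
    norm_num at hdet

/-- In a rotation quadrangle, if for each `i` the consecutive homologous
images `α i (ℓ)` and `α (i+1) (ℓ)` of a line `ℓ` have a common point, and the direction
of `ℓ` is not orthogonal to the direction of the axis `r i`, then `ℓ` intersects each of
the four relative revolute axes, i.e. `ℓ` is a common transversal of the axes. -/
theorem line_is_common_transversal
    (α : Fin 4 → (E ≃ᵃⁱ[ℝ] E)) (r : Fin 4 → AffineSubspace ℝ E)
    (hquad : IsRotationQuadrangle α r)
    (ℓ : AffineSubspace ℝ E) (hℓ : IsLine ℓ)
    (hmeet : ∀ i : Fin 4, ∃ X : E,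
      X ∈ ℓ.map (α i).toAffineIsometry.toAffineMap ∧
      X ∈ ℓ.map (α (i + 1)).toAffineIsometry.toAffineMap)
    (hnotperp : ∀ i : Fin 4,
      ¬ (∀ v ∈ ℓ.direction, ∀ w ∈ (r i).direction, ⟪v, w⟫ = 0)) :
    ∀ i : Fin 4, ∃ X : E, X ∈ ℓ ∧ X ∈ r i := by
  intro i
  obtain ⟨hne, hdet, hline_a, hfix⟩ := hquad i
  obtain ⟨X, hX1, hX2⟩ := hmeet i
  obtain ⟨Y, hY, hYX⟩ := AffineSubspace.mem_map.1 hX1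
  obtain ⟨Z, hZ, hZX⟩ := AffineSubspace.mem_map.1 hX2
  have hnp := hnotperp i
  push_neg at hnp
  obtain ⟨v, hv, w', hw', hvw⟩ := hnp
  -- abbreviations
  set β := α i with hβ
  set γ := α (i+1) with hγ
  set τ := β.symm.trans γ with hτdef
  set f := β.toAffineIsometry.toAffineMap with hfdef
  set a := (r i).map f with hadef
  set L := ℓ.map f with hLdef
  set T := τ.linearIsometryEquiv with hTdef
  set Lβ := β.linearIsometryEquiv with hLβdef
  have hflin : f.linear = (Lβ.toLinearEquiv : E →ₗ[ℝ] E) :=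
    LinearMap.ext fun x => rfl
  have hfapp : ∀ x, f x = β x := fun x => rfl
  set d := Lβ v with hd_def
  set w := Lβ w' with hw_def
  have hdL : d ∈ L.direction := by
    rw [hLdef, AffineSubspace.map_direction, hflin]
    exact Submodule.mem_map_of_mem hv
  have hwa : w ∈ a.direction := by
    rw [hadef, AffineSubspace.map_direction, hflin]
    exact Submodule.mem_map_of_mem hw'
  have hinner : ⟪d, w⟫ = ⟪v, w'⟫ := Lβ.inner_map_map v w'
  have hdw : ⟪d, w⟫ ≠ 0 := by rw [hinner]; exact hvw
  have hdne : d ≠ 0 := by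
    intro h
    apply hdw
    rw [h, inner_zero_left]
  have hwne : w ≠ 0 := by
    intro h
    apply hdw
    rw [h, inner_zero_right]
  -- point on axis
  have hane : a ≠ ⊥ := by
    intro h
    have : Module.finrank ℝ a.direction = 1 := hline_a
    rw [h, AffineSubspace.direction_bot] at this
    simp at this
  obtain ⟨p, hp⟩ := (AffineSubspace.nonempty_iff_ne_bot a).2 hane
  -- T fixes direction of a
  have hTfixdir : ∀ u ∈ a.direction, T u = u := by
    intro u hu
    have hq : u +ᵥ p ∈ a := AffineSubspace.vadd_mem_of_mem_direction hu hp
    have h1 : T u = τ (u +ᵥ p) -ᵥ τ p := by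
      rw [hTdef, ← AffineIsometryEquiv.map_vsub, vadd_vsub]
    rw [h1, hfix _ hq, hfix _ hp, vadd_vsub]
  have hTw : T w = w := hTfixdir w hwa
  -- members of L
  have hAL : X ∈ L := hX1
  have hBL : β Z ∈ L := AffineSubspace.mem_map.2 ⟨Z, hZ, rfl⟩
  have hτB : τ (β Z) = X := by
    show γ (β.symm (β Z)) = X
    rw [AffineIsometryEquiv.symm_apply_apply]
    exact hZX
  -- orthogonality of displacement to w
  have hh : ⟪X -ᵥ β Z, w⟫ = 0 := by
    have hT1 : T (β Z -ᵥ p) = X -ᵥ p := by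
      rw [hTdef, AffineIsometryEquiv.map_vsub, hτB, hfix p hp]
    have h1 : ⟪X -ᵥ p, w⟫ = ⟪β Z -ᵥ p, w⟫ := by
      calc ⟪X -ᵥ p, w⟫ = ⟪T (β Z -ᵥ p), T w⟫ := by rw [hT1, hTw]
      _ = ⟪β Z -ᵥ p, w⟫ := T.inner_map_map _ _
    rw [← vsub_sub_vsub_cancel_right X (β Z) p, inner_sub_left, h1, sub_self]
  -- L.direction = span d
  have hLrank : Module.finrank ℝ L.direction = 1 := by
    rw [hLdef, AffineSubspace.map_direction, hflin,
      LinearEquiv.finrank_map_eq Lβ.toLinearEquiv ℓ.direction]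
    exact hℓ
  have hspanL : Submodule.span ℝ {d} = L.direction := by
    apply Submodule.eq_of_le_of_finrank_eq
    · rw [Submodule.span_le, Set.singleton_subset_iff]
      exact hdL
    · rw [hLrank, finrank_span_singleton hdne]
  -- X = β Z
  have hXB : X = β Z := by
    have hmem : X -ᵥ β Z ∈ Submodule.span ℝ {d} := by
      rw [hspanL]
      exact AffineSubspace.vsub_mem_direction hAL hBL
    obtain ⟨c, hc⟩ := Submodule.mem_span_singleton.1 hmem
    have hc0 : c * ⟪d, w⟫ = 0 := by
      rw [← real_inner_smul_left, hc]
      exact hh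
    have : c = 0 := by
      rcases mul_eq_zero.1 hc0 with h | h
      · exact h
      · exact absurd h hdw
    have h0 : X -ᵥ β Z = 0 := by rw [← hc, this, zero_smul]
    exact vsub_eq_zero_iff_eq.1 h0
  have hτX : τ X = X := by nth_rewrite 1 [hXB]; exact hτB
  -- show X ∈ a
  have hXa : X ∈ a := by
    by_contra hXa
    -- fixed vector not in axis direction
    have hTvX : T (X -ᵥ p) = X -ᵥ p := by
      rw [hTdef, AffineIsometryEquiv.map_vsub, hτX, hfix p hp]
    have hspana : Submodule.span ℝ {w} = a.direction := by
      apply Submodule.eq_of_le_of_finrank_eq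
      · rw [Submodule.span_le, Set.singleton_subset_iff]
        exact hwa
      · rw [hline_a, finrank_span_singleton hwne]
    have hvXnot : X -ᵥ p ∉ Submodule.span ℝ {w} := by
      rw [hspana]
      intro h
      exact hXa ((AffineSubspace.vsub_right_mem_direction_iff_mem hp X).1 h)
    have hind : LinearIndependent ℝ ![X -ᵥ p, w] := by
      rw [linearIndependent_fin2]
      constructor
      · simpa using hwne
      · intro c hc
        apply hvXnot
        rw [Submodule.mem_span_singleton]
        exact ⟨c, by simpa using hc⟩
    have hid : ∀ x, T x = x := fixed_big T hdet (X -ᵥ p) w hTvX hTw hind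
    apply hne
    ext x
    have : τ x = T (x -ᵥ p) +ᵥ τ p := by
      rw [hTdef, AffineIsometryEquiv.map_vsub, vsub_vadd]
    rw [AffineIsometryEquiv.coe_refl, id_eq, this, hid, hfix p hp, vsub_vadd]
  -- pull back
  obtain ⟨y, hy, hyX⟩ := AffineSubspace.mem_map.1 hXa
  have : y = Y := by
    apply β.injective
    have h1 : β y = X := hyX
    have h2 : β Y = X := hYX
    rw [h1, h2]
  exact ⟨Y, hY, this ▸ hy⟩
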